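/- Let M ≥ 2 be an integer, let z1, …, zM be real numbers with zj < 0 for all j, and let s ≥ 1 be a real number. Then the convergence factor of the Parareal/FIE-FIE method with M splitting terms satisfies K_{FIE-FIE}(z1, …, zM, s) = |(∏_{j=1}^M 1/(1 − zj/s))^s − ∏_{j=1}^M 1/(1 − zj)| / (1 − |∏_{j=1}^M 1/(1 − zj)|) ≤ 1/3. -/

import Mathlib

lemma aux_two_sub_mul_exp_le {t : ℝ} (ht : 0 ≤ t) : (2 - t) * Real.exp t ≤ 2 + t := by
  have hmono : Monotone (fun t : ℝ => 2 + t - (2 - t) * Real.exp t) := by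
    have hd : ∀ x : ℝ, HasDerivAt (fun t : ℝ => 2 + t - (2 - t) * Real.exp t)
        (1 - (1 - x) * Real.exp x) x := by
      intro x
      have h1 : HasDerivAt (fun t : ℝ => 2 + t) 1 x := by
        simpa using (hasDerivAt_id x).const_add (2:ℝ)
      have h2 : HasDerivAt (fun t : ℝ => (2 - t)) (-1) x := by
        simpa using (hasDerivAt_id x).const_sub (2:ℝ)
      have h3 : HasDerivAt (fun t : ℝ => (2 - t) * Real.exp t)
          (-1 * Real.exp x + (2 - x) * Real.exp x) x := h2.mul (Real.hasDerivAt_exp x)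
      exact (h1.sub h3).congr_deriv (by ring)
    apply monotone_of_deriv_nonneg
    · exact fun x => (hd x).differentiableAt
    · intro x
      rw [(hd x).deriv]
      have : (1 - x) * Real.exp x ≤ 1 := by
        have h := Real.add_one_le_exp (-x)
        have := mul_le_mul_of_nonneg_right (by linarith : (1 : ℝ) - x ≤ Real.exp (-x))
          (Real.exp_pos x).le
        rwa [← Real.exp_add, neg_add_cancel, Real.exp_zero] at this
      linarith
  have := hmono ht
  simp only [sub_zero, Real.exp_zero, mul_one] at this
  linarith

lemma aux_prod_one_add {α : Type*} (t : Finset α) (x : α → ℝ) (hx : ∀ j, 0 ≤ x j) :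
    1 + ∑ j ∈ t, x j ≤ ∏ j ∈ t, (1 + x j) := by
  induction t using Finset.cons_induction with
  | empty => simp
  | cons a t ha ih =>
    rw [Finset.sum_cons, Finset.prod_cons]
    have hs : 0 ≤ ∑ j ∈ t, x j := Finset.sum_nonneg fun j _ => hx j
    nlinarith [hx a, ih]

lemma aux_key {X : ℝ} (hX : 0 < X) : 4 / (1 + X) ≤ 1 + 3 * Real.exp (-X) := by
  rcases le_or_gt X 4 with h4 | h4
  · have ht := aux_two_sub_mul_exp_le (by positivity : (0:ℝ) ≤ X / 2)
    have h1 : (4 - X) * Real.exp (X / 2) ≤ 4 + X := by nlinarith [Real.exp_pos (X/2)]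
    have hnn : 0 ≤ (4 - X) * Real.exp (X / 2) :=
      mul_nonneg (by linarith) (Real.exp_pos _).le
    have h2 : ((4 - X) * Real.exp (X / 2)) ^ 2 ≤ (4 + X) ^ 2 := by nlinarith
    have hexp : Real.exp (X / 2) ^ 2 = Real.exp X := by
      rw [sq, ← Real.exp_add]; ring_nf
    have h3 : (4 - X) ^ 2 * Real.exp X ≤ (4 + X) ^ 2 := by
      calc (4 - X) ^ 2 * Real.exp X = ((4 - X) * Real.exp (X / 2)) ^ 2 := by
            rw [mul_pow, hexp]
        _ ≤ (4 + X) ^ 2 := h2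
    have hE : Real.exp (-X) * Real.exp X = 1 := by rw [← Real.exp_add]; simp
    have h5 : (4 - X) ^ 2 ≤ (4 + X) ^ 2 * Real.exp (-X) := by
      nlinarith [Real.exp_pos (-X), Real.exp_pos X]
    rw [div_le_iff₀ (by linarith)]
    nlinarith [Real.exp_pos (-X), mul_nonneg hX.le (sq_nonneg (X - 2))]
  · have : 4 / (1 + X) ≤ 1 := by
      rw [div_le_one (by linarith)]; linarith
    nlinarith [Real.exp_pos (-X)]

open Finset in
/-- Convergence factor bound for the Parareal/FIE-FIE method with `M` splitting terms. -/
theorem parareal_FIE_FIE_conv_factor_M_terms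
    (M : ℕ) (hM : 2 ≤ M) (z : Fin M → ℝ) (hz : ∀ j, z j < 0)
    (s : ℝ) (hs : 1 ≤ s) :
    |(∏ j, 1 / (1 - z j / s)) ^ s - ∏ j, 1 / (1 - z j)| /
      (1 - |∏ j, 1 / (1 - z j)|) ≤ 1 / 3 := by
  have hMpos : 0 < M := by omega
  have : NeZero M := ⟨by omega⟩
  have hs0 : (0:ℝ) < s := lt_of_lt_of_le one_pos hs
  set X : ℝ := -∑ j, z j with hXdef
  have hXpos : 0 < X := by
    have : ∑ j, z j < 0 :=
      Finset.sum_neg (fun j _ => hz j) (Finset.univ_nonempty)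
    simpa [hXdef] using neg_pos.mpr this
  set G : ℝ := ∏ j, 1 / (1 - z j) with hGdef
  have hfac : ∀ j, (1:ℝ) < 1 - z j := fun j => by linarith [hz j]
  have hG0 : 0 < G := Finset.prod_pos fun j _ => one_div_pos.mpr (by linarith [hfac j])
  -- G ≤ 1/(1+X)
  have hprod_ge : 1 + X ≤ ∏ j, (1 - z j) := by
    have := aux_prod_one_add Finset.univ (fun j => -z j) (fun j => neg_nonneg.mpr (hz j).le)
    simpa [hXdef, sub_eq_add_neg] using this
  have hGle : G ≤ 1 / (1 + X) := by
    rw [hGdef]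
    rw [show (∏ j, 1 / (1 - z j)) = (∏ j, (1 - z j))⁻¹ by
      rw [← Finset.prod_inv_distrib]; simp [one_div]]
    rw [one_div]
    exact inv_anti₀ (by linarith) hprod_ge
  have hG1 : G < 1 := lt_of_le_of_lt hGle (by
    rw [div_lt_one (by linarith)]; linarith)
  -- fine propagator F
  set Q : ℝ := ∏ j, 1 / (1 - z j / s) with hQdef
  have hfacs : ∀ j, (1:ℝ) < 1 - z j / s := fun j => by
    have : z j / s < 0 := div_neg_of_neg_of_pos (hz j) hs0
    linarith
  have hQ0 : 0 < Q := Finset.prod_pos fun j _ => one_div_pos.mpr (by linarith [hfacs j])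
  set F : ℝ := Q ^ s with hFdef
  have hF0 : 0 < F := Real.rpow_pos_of_pos hQ0 s
  -- F ≤ G
  have hFG : F ≤ G := by
    rw [hFdef, hGdef,
      ← Real.finset_prod_rpow _ _ (fun j _ => (one_div_pos.mpr (by linarith [hfacs j])).le) s]
    apply Finset.prod_le_prod
      (fun j _ => Real.rpow_nonneg (one_div_pos.mpr (by linarith [hfacs j])).le s)
    intro j _
    have hb : (1:ℝ) - z j ≤ (1 - z j / s) ^ s := by
      have := one_add_mul_self_le_rpow_one_add
        (by have : 0 < -z j / s := div_pos (neg_pos.mpr (hz j)) hs0; linarith : (-1:ℝ) ≤ -z j / s) hs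
      have hne : s ≠ 0 := ne_of_gt hs0
      rw [show 1 + s * (-z j / s) = 1 - z j by field_simp; ring] at this
      rw [show 1 + -z j / s = 1 - z j / s by ring] at this
      exact this
    have hpos : (0:ℝ) < 1 - z j / s := by linarith [hfacs j]
    rw [one_div, one_div, Real.inv_rpow hpos.le]
    exact inv_anti₀ (by linarith [hfac j]) hb
  -- F ≥ exp (-X)
  have hFexp : Real.exp (-X) ≤ F := by
    have hQge : Real.exp ((∑ j, z j) / s) ≤ Q := by
      rw [hQdef, Finset.sum_div, Real.exp_sum]
      apply Finset.prod_le_prod (fun j _ => (Real.exp_pos _).le)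
      intro j _
      have h1 : 1 - z j / s ≤ Real.exp (-(z j / s)) := by
        have := Real.add_one_le_exp (-(z j / s)); linarith
      have h2 : Real.exp (z j / s) * (1 - z j / s) ≤ 1 := by
        have := mul_le_mul_of_nonneg_left h1 (Real.exp_pos (z j / s)).le
        rwa [← Real.exp_add, add_neg_cancel, Real.exp_zero] at this
      rw [le_div_iff₀ (by linarith [hfacs j])]
      simpa using h2
    have := Real.rpow_le_rpow (Real.exp_pos _).le hQge (le_of_lt hs0)
    calc Real.exp (-X) = Real.exp ((∑ j, z j) / s) ^ s := by
          rw [← Real.exp_mul]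
          congr 1
          field_simp [hXdef]
          rw [hXdef, neg_neg]
      _ ≤ Q ^ s := this
  -- assemble
  have habsG : |G| = G := abs_of_pos hG0
  have habs : |F - G| = G - F := by
    rw [abs_sub_comm]; exact abs_of_nonneg (by linarith)
  rw [habsG, habs]
  rw [div_le_div_iff₀ (by linarith) (by norm_num)]
  have hkey := aux_key hXpos
  have h4G : 4 * G ≤ 1 + 3 * Real.exp (-X) := by
    have : 4 * G ≤ 4 / (1 + X) := by
      rw [div_eq_mul_inv, ← one_div]; linarith [hGle]
    linarith
  linarith
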